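/- arXiv:1511.05196 — 3 statements merged into one kernel-verified Lean document; each statement's English description precedes it below -/
import Mathlib

section
/- Let G be a chord-free simple graph on n ≥ 4 vertices (i.e., no cycle of length at least 4 in G has a chord). Then G has at most 2n - 4 edges. -/
open SimpleGraph

/-- A simple graph is chord-free if for every cycle of length at least 4,
every edge of the graph joining two vertices of the cycle is an edge of the cycle
(i.e. no cycle of length at least 4 has a chord). -/
def ChordFree {V : Type*} (G : SimpleGraph V) : Prop :=
  ∀ ⦃v : V⦄ (c : G.Walk v v), c.IsCycle → 4 ≤ c.length →
    ∀ ⦃x y : V⦄, x ∈ c.support → y ∈ c.support → G.Adj x y → s(x, y) ∈ c.edges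

namespace CFAux

universe u


variable {V : Type*} {G : SimpleGraph V}

lemma getVert_injOn {u v : V} (p : G.Walk u v) (hp : p.IsPath) :
    ∀ {i j : ℕ}, i ≤ p.length → j ≤ p.length → p.getVert i = p.getVert j → i = j := by
  induction p with
  | nil => intro i j hi hj _; simp only [Walk.length_nil, Nat.le_zero] at hi hj; omega
  | cons h q ih =>
    rw [Walk.cons_isPath_iff] at hp
    intro i j hi hj hij
    match i, j with
    | 0, 0 => rfl
    | 0, j+1 =>
      exfalso
      apply hp.2
      rw [Walk.mem_support_iff_exists_getVert]
      exact ⟨j, by simpa [Walk.getVert_cons_succ] using hij.symm, by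
        simpa [Nat.succ_le_succ_iff] using hj⟩
    | i+1, 0 =>
      exfalso
      apply hp.2
      rw [Walk.mem_support_iff_exists_getVert]
      exact ⟨i, by simpa [Walk.getVert_cons_succ] using hij, by
        simpa [Nat.succ_le_succ_iff] using hi⟩
    | i+1, j+1 =>
      have := ih hp.1 (i := i) (j := j) (by simpa using hi) (by simpa using hj)
        (by simpa [Walk.getVert_cons_succ] using hij)
      omega

lemma eq_getVert_one_of_start_edge {u v x : V} {p : G.Walk u v} (hp : p.IsPath)
    (hx : s(u, x) ∈ p.edges) : x = p.getVert 1 := by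
  cases p with
  | nil => simp at hx
  | @cons _ b _ h q =>
    rw [Walk.cons_isPath_iff] at hp
    rw [Walk.edges_cons, List.mem_cons] at hx
    rcases hx with hx | hx
    · rw [Sym2.eq_iff] at hx
      rcases hx with ⟨-, rfl⟩ | ⟨rfl, rfl⟩
      · simp [Walk.getVert_cons_succ]
      · exact absurd h (G.irrefl)
    · exact absurd (q.fst_mem_support_of_mem_edges hx) hp.2

lemma getVert_takeUntil [DecidableEq V] {u v w : V} (p : G.Walk v w) (h : u ∈ p.support)
    {i : ℕ} (hi : i ≤ (p.takeUntil u h).length) :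
    (p.takeUntil u h).getVert i = p.getVert i := by
  conv_rhs => rw [← Walk.take_spec p h]
  rw [Walk.getVert_append]
  rcases Nat.lt_or_ge i (p.takeUntil u h).length with h' | h'
  · rw [if_pos h']
  · have hieq : i = (p.takeUntil u h).length := le_antisymm hi h'
    subst hieq
    rw [if_neg (lt_irrefl _)]
    simp

lemma mid_max {a b c : ℕ} (ha : 1 ≤ a) (hb : 1 ≤ b) (hc : 1 ≤ c)
    (hab : a ≠ b) (hac : a ≠ c) (hbc : b ≠ c) :
    ∃ x y : ℕ, (x = a ∨ x = b ∨ x = c) ∧ (y = a ∨ y = b ∨ y = c) ∧ 2 ≤ x ∧ x < y := by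
  rcases Nat.lt_or_ge a b with h1 | h1 <;> rcases Nat.lt_or_ge b c with h2 | h2 <;>
    rcases Nat.lt_or_ge a c with h3 | h3
  · exact ⟨b, c, by tauto, by tauto, by omega, by omega⟩
  · omega
  · exact ⟨c, b, by tauto, by tauto, by omega, by omega⟩
  · exact ⟨a, b, by tauto, by tauto, by omega, by omega⟩
  · exact ⟨a, c, by tauto, by tauto, by omega, by omega⟩
  · exact ⟨c, a, by tauto, by tauto, by omega, by omega⟩
  · omega
  · exact ⟨b, a, by tauto, by tauto, by omega, by omega⟩


lemma exists_degree_le_two [Fintype V] [DecidableEq V] (G : SimpleGraph V)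
    [DecidableRel G.Adj] (hne : Nonempty V) (hCF : ChordFree G) :
    ∃ v : V, G.degree v ≤ 2 := by
  classical
  by_contra hdeg
  push_neg at hdeg
  obtain ⟨v₀⟩ := hne
  set P : ℕ → Prop := fun n => ∃ (x y : V) (r : G.Walk x y), r.IsPath ∧ r.length = n with hPdef
  have hP0 : P 0 := ⟨v₀, v₀, Walk.nil, Walk.IsPath.nil, rfl⟩
  obtain ⟨u, t, p, hp, hplen⟩ : P (Nat.findGreatest P (Fintype.card V)) :=
    Nat.findGreatest_spec (Nat.zero_le _) hP0
  -- every neighbor of u lies on p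
  have hnb : ∀ x : V, G.Adj u x → x ∈ p.support := by
    intro x hx
    by_contra hxs
    have hp' : (Walk.cons hx.symm p).IsPath := by
      rw [Walk.cons_isPath_iff]; exact ⟨hp, hxs⟩
    have hPnew : P (p.length + 1) := ⟨x, t, _, hp', by simp⟩
    have hlt : p.length + 1 ≤ Fintype.card V := by
      have := hp'.length_lt
      simp only [Walk.length_cons] at this
      omega
    exact Nat.findGreatest_is_greatest (by omega) hlt hPnew
  have h3 : 2 < (G.neighborFinset u).card := by
    rw [card_neighborFinset_eq_degree]; exact hdeg u
  obtain ⟨a, b, c, hha, hhb, hhc, hab, hac, hbc⟩ := Finset.two_lt_card_iff.mp h3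
  rw [mem_neighborFinset] at hha hhb hhc
  obtain ⟨ia, hia, hialen⟩ := Walk.mem_support_iff_exists_getVert.mp (hnb a hha)
  obtain ⟨ib, hib, hiblen⟩ := Walk.mem_support_iff_exists_getVert.mp (hnb b hhb)
  obtain ⟨ic, hic, hiclen⟩ := Walk.mem_support_iff_exists_getVert.mp (hnb c hhc)
  have h1a : 1 ≤ ia := by
    rcases Nat.eq_zero_or_pos ia with rfl | h
    · rw [Walk.getVert_zero] at hia; exact absurd hia hha.ne
    · omega
  have h1b : 1 ≤ ib := by
    rcases Nat.eq_zero_or_pos ib with rfl | h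
    · rw [Walk.getVert_zero] at hib; exact absurd hib hhb.ne
    · omega
  have h1c : 1 ≤ ic := by
    rcases Nat.eq_zero_or_pos ic with rfl | h
    · rw [Walk.getVert_zero] at hic; exact absurd hic hhc.ne
    · omega
  have hne_ab : ia ≠ ib := fun hh => hab (by rw [← hia, ← hib, hh])
  have hne_ac : ia ≠ ic := fun hh => hac (by rw [← hia, ← hic, hh])
  have hne_bc : ib ≠ ic := fun hh => hbc (by rw [← hib, ← hic, hh])
  obtain ⟨i2, i3, hm2, hm3, h2le, hlt23⟩ := mid_max h1a h1b h1c hne_ab hne_ac hne_bc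
  have hi2len : i2 ≤ p.length := by rcases hm2 with rfl | rfl | rfl <;> assumption
  have hi3len : i3 ≤ p.length := by rcases hm3 with rfl | rfl | rfl <;> assumption
  have hadjm : G.Adj u (p.getVert i2) := by
    rcases hm2 with rfl | rfl | rfl <;> [rw [hia]; rw [hib]; rw [hic]] <;> assumption
  have hadjw : G.Adj u (p.getVert i3) := by
    rcases hm3 with rfl | rfl | rfl <;> [rw [hia]; rw [hib]; rw [hic]] <;> assumption
  set m := p.getVert i2 with hmdef
  set w := p.getVert i3 with hwdef
  have hwsup : w ∈ p.support := Walk.mem_support_iff_exists_getVert.mpr ⟨i3, rfl, hi3len⟩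
  set q := p.takeUntil w hwsup with hqdef
  have hq : q.IsPath := hp.takeUntil hwsup
  have hqlen : q.length = i3 := by
    have h1 : p.getVert q.length = w := by
      rw [← getVert_takeUntil p hwsup le_rfl, Walk.getVert_length]
    exact getVert_injOn p hp (p.length_takeUntil_le hwsup) hi3len h1
  have hqlen' : (p.takeUntil w hwsup).length = i3 := hqlen
  have hne_uw : s(u, w) ∉ q.reverse.edges := by
    rw [Walk.edges_reverse, List.mem_reverse]
    intro hmem
    have hgw : w = q.getVert 1 := eq_getVert_one_of_start_edge hq hmem
    have h1 : p.getVert 1 = w := by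
      rw [← getVert_takeUntil p hwsup (by omega), ← hgw]
    have := getVert_injOn p hp (by omega) hi3len h1
    omega
  have hcyc : (Walk.cons hadjw q.reverse).IsCycle :=
    (Walk.cons_isCycle_iff _ _).mpr ⟨hq.reverse, hne_uw⟩
  have hclen : 4 ≤ (Walk.cons hadjw q.reverse).length := by
    rw [Walk.length_cons, Walk.length_reverse]; omega
  have husup : u ∈ (Walk.cons hadjw q.reverse).support := Walk.start_mem_support _
  have hmsup : m ∈ (Walk.cons hadjw q.reverse).support := by
    rw [Walk.support_cons]
    refine List.mem_cons_of_mem _ ?_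
    rw [Walk.support_reverse, List.mem_reverse]
    refine Walk.mem_support_iff_exists_getVert.mpr ⟨i2, ?_, by omega⟩
    rw [getVert_takeUntil p hwsup (by omega)]
  have hchord := hCF _ hcyc hclen husup hmsup hadjm
  rw [Walk.edges_cons, List.mem_cons] at hchord
  rcases hchord with hc1 | hc2
  · rw [Sym2.eq_iff] at hc1
    rcases hc1 with ⟨-, hmw⟩ | ⟨huw', -⟩
    · have := getVert_injOn p hp hi2len hi3len hmw
      omega
    · exact hadjw.ne huw'
  · rw [Walk.edges_reverse, List.mem_reverse] at hc2
    have hgm : m = q.getVert 1 := eq_getVert_one_of_start_edge hq hc2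
    have h1 : p.getVert 1 = m := by
      rw [← getVert_takeUntil p hwsup (by omega), ← hgm]
    have := getVert_injOn p hp (by omega) hi2len h1
    omega


lemma ChordFree.comap {W : Type*} {G : SimpleGraph W} (h : ChordFree G) (f : V ↪ W) :
    ChordFree (G.comap f) := by
  intro v c hc hl x y hx hy hadj
  let F : G.comap f →g G := (SimpleGraph.Embedding.comap f G).toHom
  have hFinj : Function.Injective F := fun a b hab => f.injective hab
  have hc2 : (c.map F).IsCycle := hc.map hFinj
  have hl2 : 4 ≤ (c.map F).length := by rwa [Walk.length_map]
  have hxs : F x ∈ (c.map F).support := by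
    rw [Walk.support_map]; exact List.mem_map_of_mem hx
  have hys : F y ∈ (c.map F).support := by
    rw [Walk.support_map]; exact List.mem_map_of_mem hy
  have hadj2 : G.Adj (F x) (F y) := hadj
  have hmem := h (c.map F) hc2 hl2 hxs hys hadj2
  rw [Walk.edges_map, List.mem_map] at hmem
  obtain ⟨e, he, hee⟩ := hmem
  have : e = s(x, y) := Sym2.map.injective hFinj (by rw [hee]; rfl)
  rwa [← this]

lemma card_edgeSet_split [Fintype V] [DecidableEq V] (G : SimpleGraph V)
    [DecidableRel G.Adj] (v : V) :
    Nat.card G.edgeSet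
      = Nat.card (G.comap (Function.Embedding.subtype (· ≠ v))).edgeSet + G.degree v := by
  classical
  set G' := G.comap (Function.Embedding.subtype (· ≠ v)) with hG'
  rw [Nat.card_eq_fintype_card, Nat.card_eq_fintype_card, ← SimpleGraph.edgeFinset_card,
    ← SimpleGraph.edgeFinset_card]
  rw [← Finset.card_filter_add_card_filter_not (p := fun e => v ∈ e) (s := G.edgeFinset)]
  have h1 : (G.edgeFinset.filter (fun e => v ∈ e)) = G.incidenceFinset v := by
    ext e
    simp [SimpleGraph.mem_incidenceFinset, SimpleGraph.mem_edgeFinset,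
      SimpleGraph.incidenceSet]
  have h2 : (G.edgeFinset.filter (fun e => ¬ v ∈ e)).card = G'.edgeFinset.card := by
    symm
    refine Finset.card_bij (fun e _ => Sym2.map Subtype.val e) ?_ ?_ ?_
    · intro e he
      induction e with
      | _ a b =>
        rw [SimpleGraph.mem_edgeFinset] at he
        rw [Finset.mem_filter, SimpleGraph.mem_edgeFinset]
        constructor
        · exact he
        · simp only [Sym2.map_pair_eq, Sym2.mem_iff]
          push_neg
          exact ⟨fun hh => a.2 hh.symm, fun hh => b.2 hh.symm⟩
    · intro e₁ _ e₂ _ hee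
      exact Sym2.map.injective Subtype.val_injective hee
    · intro e he
      rw [Finset.mem_filter, SimpleGraph.mem_edgeFinset] at he
      induction e with
      | _ x y =>
        obtain ⟨hadj, hv⟩ := he
        rw [Sym2.mem_iff] at hv
        push_neg at hv
        refine ⟨s(⟨x, fun hh => hv.1 hh.symm⟩, ⟨y, fun hh => hv.2 hh.symm⟩), ?_, ?_⟩
        · rw [SimpleGraph.mem_edgeFinset]
          exact hadj
        · simp only [Sym2.map_pair_eq]
  rw [h1, h2, SimpleGraph.card_incidenceFinset_eq_degree]
  omega


lemma base4 [Fintype V] (G : SimpleGraph V) (hcard : Fintype.card V = 4)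
    (hCF : ChordFree G) : Nat.card G.edgeSet ≤ 4 := by
  classical
  by_contra hcon
  push_neg at hcon
  rw [Nat.card_eq_fintype_card, ← SimpleGraph.edgeFinset_card] at hcon
  have hsum : G.edgeFinset.card + Gᶜ.edgeFinset.card = 6 := by
    have hdisj : Disjoint G.edgeFinset Gᶜ.edgeFinset := by
      rw [SimpleGraph.disjoint_edgeFinset]
      exact disjoint_compl_right
    rw [← Finset.card_union_of_disjoint hdisj, ← SimpleGraph.edgeFinset_sup]
    have htop : G ⊔ Gᶜ = ⊤ := sup_compl_eq_top
    have h1 : (G ⊔ Gᶜ).edgeFinset.card = Nat.card (G ⊔ Gᶜ).edgeSet := by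
      rw [SimpleGraph.edgeFinset_card, Nat.card_eq_fintype_card]
    rw [h1, htop, Nat.card_eq_fintype_card, ← SimpleGraph.edgeFinset_card,
      SimpleGraph.card_edgeFinset_top_eq_card_choose_two, hcard]
    decide
  have hc1 : Gᶜ.edgeFinset.card ≤ 1 := by omega
  have key : ∃ a c : V, a ≠ c ∧ ∀ x y : V, x ≠ y → s(x, y) ≠ s(a, c) → G.Adj x y := by
    rcases Finset.eq_empty_or_nonempty Gᶜ.edgeFinset with hemp | ⟨e, he⟩
    · have h2 : 1 < Fintype.card V := by omega
      obtain ⟨a, c, hac⟩ := Fintype.exists_pair_of_one_lt_card h2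
      refine ⟨a, c, hac, ?_⟩
      intro x y hxy _
      by_contra hnadj
      have hm : s(x, y) ∈ Gᶜ.edgeFinset := by
        rw [SimpleGraph.mem_edgeFinset, SimpleGraph.mem_edgeSet, SimpleGraph.compl_adj]
        exact ⟨hxy, hnadj⟩
      rw [hemp] at hm
      simp at hm
    · induction e using Sym2.ind with
      | _ a c =>
        have hGc : Gᶜ.Adj a c := by
          rw [SimpleGraph.mem_edgeFinset, SimpleGraph.mem_edgeSet] at he
          exact he
        refine ⟨a, c, hGc.ne, ?_⟩
        intro x y hxy hne
        by_contra hnadj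
        have hmem : s(x, y) ∈ Gᶜ.edgeFinset := by
          rw [SimpleGraph.mem_edgeFinset, SimpleGraph.mem_edgeSet, SimpleGraph.compl_adj]
          exact ⟨hxy, hnadj⟩
        have : 1 < Gᶜ.edgeFinset.card := Finset.one_lt_card.mpr ⟨_, hmem, _, he, hne⟩
        omega
  obtain ⟨a, c, hac, hAll⟩ := key
  have hsd : (Finset.univ \ {a, c} : Finset V).card = 2 := by
    rw [Finset.card_sdiff_of_subset (Finset.subset_univ _), Finset.card_univ, hcard,
      Finset.card_insert_of_notMem (by simp [hac]), Finset.card_singleton]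
  obtain ⟨b, d, hbd, hset⟩ := Finset.card_eq_two.mp hsd
  have hbmem : b ∈ Finset.univ \ ({a, c} : Finset V) := by rw [hset]; simp
  have hdmem : d ∈ Finset.univ \ ({a, c} : Finset V) := by rw [hset]; simp
  rw [Finset.mem_sdiff, Finset.mem_insert, Finset.mem_singleton] at hbmem hdmem
  push_neg at hbmem hdmem
  obtain ⟨-, hba, hbc⟩ := hbmem
  obtain ⟨-, hda, hdc⟩ := hdmem
  have hab : G.Adj a b := by
    refine hAll a b (Ne.symm hba) ?_
    rw [Ne, Sym2.eq_iff]
    tauto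
  have hbc' : G.Adj b c := by
    refine hAll b c hbc ?_
    rw [Ne, Sym2.eq_iff]
    tauto
  have hcd : G.Adj c d := by
    refine hAll c d (Ne.symm hdc) ?_
    rw [Ne, Sym2.eq_iff]
    tauto
  have hda' : G.Adj d a := by
    refine hAll d a hda ?_
    rw [Ne, Sym2.eq_iff]
    tauto
  have hbd' : G.Adj b d := by
    refine hAll b d hbd ?_
    rw [Ne, Sym2.eq_iff]
    tauto
  set C : G.Walk a a := Walk.cons hab (Walk.cons hbc' (Walk.cons hcd hda'.toWalk)) with hC
  have hcyc : C.IsCycle := by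
    rw [hC, Walk.cons_isCycle_iff]
    constructor
    · rw [Walk.isPath_def]
      simp only [Walk.support_cons, SimpleGraph.Adj.toWalk, Walk.support_nil, List.nodup_cons,
        List.mem_cons, List.mem_singleton, List.not_mem_nil, not_false_iff, List.nodup_nil,
        and_true, List.mem_nil_iff, or_false]
      refine ⟨by tauto, by tauto, by tauto⟩
    · simp only [Walk.edges_cons, SimpleGraph.Adj.toWalk, Walk.edges_nil, List.mem_cons,
        List.not_mem_nil, or_false, Sym2.eq_iff]
      tauto
  have hlen : 4 ≤ C.length := by rw [hC]; simp
  have hbsup : b ∈ C.support := by rw [hC]; simp [Walk.support_cons]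
  have hdsup : d ∈ C.support := by rw [hC]; simp [Walk.support_cons]
  have hfin := hCF C hcyc hlen hbsup hdsup hbd'
  rw [hC] at hfin
  simp only [Walk.edges_cons, SimpleGraph.Adj.toWalk, Walk.edges_nil, List.mem_cons,
    List.not_mem_nil, or_false, Sym2.eq_iff] at hfin
  tauto

theorem aux : ∀ (n : ℕ), ∀ {V : Type u} [Fintype V] (G : SimpleGraph V),
    Fintype.card V = n → 4 ≤ n → ChordFree G → Nat.card G.edgeSet ≤ 2 * n - 4 := by
  intro n
  induction n using Nat.strong_induction_on with
  | _ n IH =>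
    intro V _ G hcard hn hCF
    classical
    rcases eq_or_lt_of_le hn with h4 | h5
    · have := base4 G (by omega) hCF
      omega
    · have hpos : 0 < Fintype.card V := by omega
      have hne : Nonempty V := Fintype.card_pos_iff.mp hpos
      obtain ⟨v, hv⟩ := exists_degree_le_two G hne hCF
      have hsplit := card_edgeSet_split G v
      have hcard'' : Fintype.card {x : V // x ≠ v} = Fintype.card V - 1 := by
        rw [Fintype.card_subtype, Finset.filter_ne',
          Finset.card_erase_of_mem (Finset.mem_univ v), Finset.card_univ]
      have hcard' : Fintype.card {x : V // x ≠ v} = n - 1 := by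
        rw [hcard'', hcard]
      have hCF' : ChordFree (G.comap (Function.Embedding.subtype (· ≠ v))) :=
        ChordFree.comap hCF _
      have hIH := IH (n - 1) (by omega) (G.comap (Function.Embedding.subtype (· ≠ v)))
        hcard' (by omega) hCF'
      omega


end CFAux

theorem chordFree_sparsity {V : Type*} [Fintype V] [DecidableEq V]
    (G : SimpleGraph V) [DecidableRel G.Adj]
    (hn : 4 ≤ Fintype.card V) (h : ChordFree G) :
    G.edgeFinset.card ≤ 2 * Fintype.card V - 4 := by
  have h' := CFAux.aux (Fintype.card V) G rfl hn h
  rwa [Nat.card_eq_fintype_card, ← SimpleGraph.edgeFinset_card] at h'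
end

section
/- Every simple graph G on n ≥ 4 vertices with more than 2n - 4 edges contains a cycle of length at least 4 together with a chord of that cycle. -/
open SimpleGraph

universe u

section Aux
set_option linter.unusedSectionVars false

variable {V : Type u} [DecidableEq V] {G : SimpleGraph V}






lemma edge_start_eq_snd {u v w : V} (q : G.Walk u v) (hq : q.IsPath)
    (he : s(u, w) ∈ q.edges) : ∃ h1 : 1 < q.support.length, q.support[1] = w := by
  cases q with
  | nil => simp at he
  | cons h r =>
    rename_i x
    rw [Walk.cons_isPath_iff] at hq
    rw [Walk.edges_cons, List.mem_cons] at he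
    refine ⟨by simp [Walk.length_support], ?_⟩
    simp only [Walk.support_cons, List.getElem_cons_succ]
    have h0 : r.support[0]'(by simp [Walk.length_support]) = x := by
      cases r <;> simp
    rcases he with he | he
    · rw [Sym2.eq_iff] at he
      rcases he with ⟨-, h2⟩ | ⟨h1, h2⟩
      · rw [h0, h2]
      · exact absurd h1.symm (G.ne_of_adj h.symm)
    · exact absurd (Walk.fst_mem_support_of_mem_edges r he) hq.2

lemma support_takeUntil_eq_take {u v w : V} (p : G.Walk u v) (h : w ∈ p.support) :
    (p.takeUntil w h).support = p.support.take ((p.takeUntil w h).length + 1) := by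
  have hspec := p.take_spec h
  have h1 : p.support = (p.takeUntil w h).support ++ ((p.dropUntil w h).support).tail := by
    rw [← Walk.support_append, hspec]
  rw [h1, ← Walk.length_support]
  exact List.take_left.symm

lemma support_getElem_takeUntil {u v w : V} (p : G.Walk u v) (h : w ∈ p.support)
    (hd : (p.takeUntil w h).length < p.support.length) :
    p.support[(p.takeUntil w h).length] = w := by
  have h1 := support_takeUntil_eq_take p h
  have h2 := (p.takeUntil w h).getLast_support
  have h3 : (p.takeUntil w h).support.length = (p.takeUntil w h).length + 1 :=
    Walk.length_support _
  rw [List.getLast_eq_getElem] at h2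
  have h4 : (p.takeUntil w h).support[(p.takeUntil w h).support.length - 1]'(by omega) =
      p.support[(p.takeUntil w h).length] := by
    rw [List.getElem_of_eq h1]
    rw [List.getElem_take]
    congr 1
    omega
  rw [← h4, h2]

lemma min_degree_three_chorded [Fintype V] (G : SimpleGraph V) [DecidableRel G.Adj]
    (hne : Nonempty V) (hdeg : ∀ v : V, 3 ≤ G.degree v) :
    ∃ (v : V) (c : G.Walk v v), c.IsCycle ∧ 4 ≤ c.length ∧
      ∃ x y : V, x ∈ c.support ∧ y ∈ c.support ∧ G.Adj x y ∧ s(x, y) ∉ c.edges := by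
  classical
  -- the set of path lengths
  set S : Set ℕ := {k | ∃ (u v : V) (p : G.Walk u v), p.IsPath ∧ p.length = k} with hS
  obtain ⟨u0⟩ := hne
  have hSne : S.Nonempty := ⟨0, u0, u0, Walk.nil, Walk.IsPath.nil, rfl⟩
  have hSbdd : BddAbove S := by
    refine ⟨Fintype.card V, fun k hk => ?_⟩
    obtain ⟨u, v, p, hp, rfl⟩ := hk
    exact le_of_lt hp.length_lt
  set k := sSup S with hk
  obtain ⟨u, v, p, hp, hlen⟩ : k ∈ S := Nat.sSup_mem hSne hSbdd
  have hmax : ∀ (a b : V) (q : G.Walk a b), q.IsPath → q.length ≤ k :=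
    fun a b q hq => le_csSup hSbdd ⟨a, b, q, hq, rfl⟩
  -- all neighbors of u are on p
  have hnb : ∀ w, G.Adj u w → w ∈ p.support := by
    intro w hw
    by_contra hws
    have hcons : (Walk.cons hw.symm p).IsPath := hp.cons hws
    have := hmax _ _ _ hcons
    simp only [Walk.length_cons] at this
    omega
  have hnodup := hp.support_nodup
  -- position function
  have hslen : p.support.length = p.length + 1 := Walk.length_support p
  set pos : V → ℕ := fun w => if h : w ∈ p.support then (p.takeUntil w h).length else 0
    with hpos
  have hposlt : ∀ w (h : w ∈ p.support), pos w < p.support.length := by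
    intro w h
    rw [hpos]
    simp only [h, dif_pos]
    have := p.length_takeUntil_le h
    omega
  have hget : ∀ w (h : w ∈ p.support), p.support[pos w]'(hposlt w h) = w := by
    intro w h
    simp only [hpos, h, dif_pos]
    exact support_getElem_takeUntil p h (by have := p.length_takeUntil_le h; omega)
  have hinj : ∀ w1 w2, w1 ∈ p.support → w2 ∈ p.support → pos w1 = pos w2 → w1 = w2 := by
    intro w1 w2 h1 h2 he
    have g1 := hget w1 h1
    have g2 := hget w2 h2
    rw [← g1, ← g2]
    congr 1
  have hsupp0 : p.support[0]'(by omega) = u := by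
    cases p <;> simp
  -- neighbors have position ≥ 1
  have hpos1 : ∀ w, G.Adj u w → 1 ≤ pos w := by
    intro w hw
    by_contra hlt
    have h0 : pos w = 0 := by omega
    have : w = u := by
      have h2 := hget w (hnb w hw)
      simp only [h0] at h2
      rw [← h2, hsupp0]
    exact G.irrefl (this ▸ hw)
  -- pick three neighbors
  have hcard : 3 ≤ (G.neighborFinset u).card := by
    rw [G.card_neighborFinset_eq_degree]
    exact hdeg u
  have hNne : (G.neighborFinset u).Nonempty := Finset.card_pos.mp (by omega)
  obtain ⟨c, hcN, hcmax⟩ := Finset.exists_max_image (G.neighborFinset u) pos hNne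
  have hN'card : 2 ≤ ((G.neighborFinset u).erase c).card := by
    rw [Finset.card_erase_of_mem hcN]; omega
  have hN'ne : ((G.neighborFinset u).erase c).Nonempty := Finset.card_pos.mp (by omega)
  obtain ⟨b, hbN', hbmax⟩ := Finset.exists_max_image _ pos hN'ne
  have hN''ne : (((G.neighborFinset u).erase c).erase b).Nonempty := by
    apply Finset.card_pos.mp
    rw [Finset.card_erase_of_mem hbN']
    omega
  obtain ⟨a, haN''⟩ := hN''ne
  have haN' : a ∈ (G.neighborFinset u).erase c := Finset.mem_of_mem_erase haN''
  have hbN : b ∈ G.neighborFinset u := Finset.mem_of_mem_erase hbN'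
  have haN : a ∈ G.neighborFinset u := Finset.mem_of_mem_erase haN'
  rw [mem_neighborFinset] at hcN hbN haN
  have hab : a ≠ b := Finset.ne_of_mem_erase haN''
  have hbc : b ≠ c := Finset.ne_of_mem_erase hbN'
  have hposab : pos a < pos b := by
    have h1 := hbmax a haN'
    have h2 : pos a ≠ pos b := fun he => hab (hinj _ _ (hnb a haN) (hnb b hbN) he)
    omega
  have hposbc : pos b < pos c := by
    have h1 := hcmax b (Finset.mem_of_mem_erase hbN')
    have h2 : pos b ≠ pos c := fun he => hbc (hinj _ _ (hnb b hbN) (hnb c hcN) he)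
    omega
  have hposb2 : 2 ≤ pos b := by
    have := hpos1 a haN
    omega
  have hposc3 : 3 ≤ pos c := by omega
  -- construct the cycle
  have hc_supp : c ∈ p.support := hnb c hcN
  set q := p.takeUntil c hc_supp with hqdef
  have hqpath : q.IsPath := hp.takeUntil hc_supp
  have hqlen : q.length = pos c := by
    simp only [hpos, hc_supp, dif_pos, hqdef]
  have hqsupp : q.support = p.support.take (q.length + 1) :=
    support_takeUntil_eq_take p hc_supp
  -- membership at index 1 forces position 1
  have hkey : ∀ w', s(u, w') ∈ q.edges → w' ∈ p.support → pos w' = 1 := by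
    intro w' hw' hws
    obtain ⟨hh1, hh2⟩ := edge_start_eq_snd q hqpath hw'
    have hh1' : 1 < p.support.length := by
      have : q.support.length ≤ p.support.length := by
        rw [hqsupp, List.length_take]
        omega
      omega
    have hp1 : p.support[1]'hh1' = w' := by
      rw [← hh2]
      simp only [hqsupp, List.getElem_take]
    have hpw := hget w' hws
    have := hnodup.getElem_inj_iff (hi := hh1') (hj := hposlt w' hws)
    rw [hp1, hpw] at this
    exact (this.mp rfl).symm
  set cyc : G.Walk u u := Walk.cons hcN q.reverse with hcyc
  have hcycle : cyc.IsCycle := by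
    rw [hcyc, Walk.cons_isCycle_iff]
    refine ⟨hqpath.reverse, fun hmem => ?_⟩
    rw [Walk.edges_reverse, List.mem_reverse] at hmem
    have := hkey c hmem hc_supp
    omega
  have hlen4 : 4 ≤ cyc.length := by
    rw [hcyc]
    simp only [Walk.length_cons, Walk.length_reverse]
    omega
  have hb_supp : b ∈ cyc.support := by
    rw [hcyc, Walk.support_cons]
    refine List.mem_cons_of_mem _ ?_
    rw [Walk.support_reverse, List.mem_reverse]
    have hblt : pos b < q.support.length := by
      rw [hqsupp, List.length_take]
      have := hposlt b (hnb b hbN)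
      omega
    have : q.support[pos b]'hblt = b := by
      simp only [hqsupp, List.getElem_take]
      exact hget b (hnb b hbN)
    rw [← this]
    exact List.getElem_mem _
  have hchord : s(u, b) ∉ cyc.edges := by
    rw [hcyc, Walk.edges_cons, List.mem_cons]
    rintro (heq | hmem)
    · rw [Sym2.eq_iff] at heq
      rcases heq with ⟨-, h2⟩ | ⟨h1, -⟩
      · exact hbc h2
      · exact G.ne_of_adj hcN h1
    · rw [Walk.edges_reverse, List.mem_reverse] at hmem
      have := hkey b hmem (hnb b hbN)
      omega
  exact ⟨u, cyc, hcycle, hlen4, u, b, cyc.start_mem_support, hb_supp, hbN, hchord⟩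




lemma card_edge_induce_compl [Fintype V] (G : SimpleGraph V) [DecidableRel G.Adj] (v : V) :
    G.edgeFinset.card ≤ (G.induce ({v}ᶜ : Set V)).edgeFinset.card + G.degree v := by
  classical
  have hsplit : G.edgeFinset.card =
      (G.edgeFinset.filter (fun e => v ∉ e)).card + (G.edgeFinset.filter (fun e => v ∈ e)).card := by
    rw [← Finset.card_filter_add_card_filter_not (p := fun e => v ∉ e)]
    congr 1
    simp
  have hinc : (G.edgeFinset.filter (fun e => v ∈ e)).card = G.degree v := by
    rw [← G.card_incidenceFinset_eq_degree v, G.incidenceFinset_eq_filter v]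
  have hsurj : (G.edgeFinset.filter (fun e => v ∉ e)).card ≤
      (G.induce ({v}ᶜ : Set V)).edgeFinset.card := by
    apply Finset.card_le_card_of_surjOn (Sym2.map (Subtype.val))
    intro e he
    simp only [Finset.coe_filter, Set.mem_setOf_eq, mem_edgeFinset] at he
    obtain ⟨he1, he2⟩ := he
    induction e with
    | _ x y =>
      rw [mem_edgeSet] at he1
      rw [Sym2.mem_iff] at he2
      push_neg at he2
      refine ⟨s(⟨x, by simp [Ne.symm he2.1]⟩, (⟨y, by simp [Ne.symm he2.2]⟩ : ({v}ᶜ : Set V))), ?_, rfl⟩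
      simp only [Finset.mem_coe, mem_edgeFinset, mem_edgeSet]
      exact he1
  omega




omit [DecidableEq V] in
lemma transfer_chorded {V W : Type u} {G : SimpleGraph V} {H : SimpleGraph W}
    (f : G ↪g H)
    (h : ∃ (v : V) (c : G.Walk v v), c.IsCycle ∧ 4 ≤ c.length ∧
      ∃ x y : V, x ∈ c.support ∧ y ∈ c.support ∧ G.Adj x y ∧ s(x, y) ∉ c.edges) :
    ∃ (v : W) (c : H.Walk v v), c.IsCycle ∧ 4 ≤ c.length ∧
      ∃ x y : W, x ∈ c.support ∧ y ∈ c.support ∧ H.Adj x y ∧ s(x, y) ∉ c.edges := by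
  obtain ⟨v, c, hc, hlen, x, y, hx, hy, hadj, hch⟩ := h
  refine ⟨f v, c.map f.toHom, hc.map f.injective, by rwa [Walk.length_map], f x, f y, ?_, ?_,
    f.toHom.map_adj hadj, ?_⟩
  · rw [Walk.support_map]; exact List.mem_map_of_mem hx
  · rw [Walk.support_map]; exact List.mem_map_of_mem hy
  · rw [Walk.edges_map]
    intro hmem
    obtain ⟨e, he, heq⟩ := List.mem_map.mp hmem
    have : e = s(x, y) := Sym2.map.injective f.injective (heq.trans (by rfl))
    exact hch (this ▸ he)

end Aux

theorem aux : ∀ (n : ℕ) {V : Type u} [Fintype V] [DecidableEq V] (G : SimpleGraph V)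
    [DecidableRel G.Adj], Fintype.card V = n → 4 ≤ n → 2 * n - 4 < G.edgeFinset.card →
    ∃ (v : V) (c : G.Walk v v), c.IsCycle ∧ 4 ≤ c.length ∧
      ∃ x y : V, x ∈ c.support ∧ y ∈ c.support ∧ G.Adj x y ∧ s(x, y) ∉ c.edges := by
  intro n
  induction n using Nat.strong_induction_on with
  | _ n ih =>
    intro V _ _ G _ hcard hn hE
    classical
    by_cases hdeg : ∀ v : V, 3 ≤ G.degree v
    · exact min_degree_three_chorded G
        (Fintype.card_pos_iff.mp (by omega)) hdeg
    · push_neg at hdeg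
      obtain ⟨v, hv⟩ := hdeg
      have hv2 : G.degree v ≤ 2 := by omega
      have hcards : Fintype.card ({v}ᶜ : Set V) = n - 1 := by
        rw [← hcard]
        rw [Fintype.card_compl_set]
        simp
      have hEs := card_edge_induce_compl G v
      rcases Nat.lt_or_ge n 5 with h4 | h5
      · -- n = 4 case
        have hn4 : n = 4 := by omega
        -- G.induce s has at most 3 edges
        have hEs3 : (G.induce ({v}ᶜ : Set V)).edgeFinset.card ≤ 3 := by
          have := card_edgeFinset_le_card_choose_two (G := G.induce ({v}ᶜ : Set V))
          rw [hcards, hn4] at this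
          simpa using this
        have hE5 : G.edgeFinset.card = 5 := by
          have h1 := card_edgeFinset_le_card_choose_two (G := G)
          rw [hcard, hn4] at h1
          simp only [Nat.choose] at h1
          omega
        have hdv : G.degree v = 2 := by omega
        have hEs3' : (G.induce ({v}ᶜ : Set V)).edgeFinset.card = 3 := by omega
        -- the induced graph is complete
        have hcomp : ∀ x y : V, x ≠ v → y ≠ v → x ≠ y → G.Adj x y := by
          intro x y hx hy hxy
          have htop : ((⊤ : SimpleGraph ({v}ᶜ : Set V))).edgeFinset.card = 3 := by
            rw [card_edgeFinset_top_eq_card_choose_two, hcards, hn4]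
            decide
          have hsub : (G.induce ({v}ᶜ : Set V)).edgeFinset ⊆ (⊤ : SimpleGraph ({v}ᶜ : Set V)).edgeFinset :=
            edgeFinset_mono le_top
          have heq : (G.induce ({v}ᶜ : Set V)).edgeFinset = (⊤ : SimpleGraph ({v}ᶜ : Set V)).edgeFinset :=
            Finset.eq_of_subset_of_card_le hsub (by omega)
          have hmem : s(((⟨x, by simp [hx]⟩ : ({v}ᶜ : Set V))), (⟨y, by simp [hy]⟩ : ({v}ᶜ : Set V))) ∈
              (⊤ : SimpleGraph ({v}ᶜ : Set V)).edgeFinset := by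
            rw [mem_edgeFinset, mem_edgeSet]
            simp [top_adj, Subtype.ext_iff, hxy]
          rw [← heq, mem_edgeFinset, mem_edgeSet] at hmem
          exact hmem
        -- the two neighbors of v
        have hcard2 : (G.neighborFinset v).card = 2 := by
          rw [G.card_neighborFinset_eq_degree]; exact hdv
        obtain ⟨a, b, hab, hNab⟩ := Finset.card_eq_two.mp hcard2
        have hva : G.Adj v a := by
          rw [← mem_neighborFinset, hNab]; simp
        have hvb : G.Adj v b := by
          rw [← mem_neighborFinset, hNab]; simp
        have hav : a ≠ v := fun h => G.irrefl (h ▸ hva)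
        have hbv : b ≠ v := fun h => G.irrefl (h ▸ hvb)
        -- a fourth vertex
        have hex : ∃ c : V, c ∉ ({v, a, b} : Finset V) := by
          by_contra hcon
          push_neg at hcon
          have : (Finset.univ : Finset V) ⊆ {v, a, b} := fun c _ => hcon c
          have h1 := Finset.card_le_card this
          have h2 : ({v, a, b} : Finset V).card ≤ 3 := by
            apply (Finset.card_insert_le _ _).trans
            have := Finset.card_insert_le a ({b} : Finset V)
            simp at this ⊢
            omega
          rw [Finset.card_univ, hcard, hn4] at h1
          omega
        obtain ⟨c, hc⟩ := hex
        simp only [Finset.mem_insert, Finset.mem_singleton, not_or] at hc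
        obtain ⟨hcv, hca, hcb⟩ := hc
        have hac : G.Adj a c := hcomp a c hav hcv (Ne.symm hca)
        have hcbadj : G.Adj c b := hcomp c b hcv hbv hcb
        have habadj : G.Adj a b := hcomp a b hav hbv (fun h => hab h)
        have hacne : a ≠ c := G.ne_of_adj hac
        have hcbne : c ≠ b := G.ne_of_adj hcbadj
        clear hEs hEs3 hEs3' hE5 hE hcards ih hcomp hNab hcard2 h4 hv hv2 hn hn4 hcard
        -- the 4-cycle v a c b v
        set rest : G.Walk a v :=
          Walk.cons hac (Walk.cons hcbadj (Walk.cons hvb.symm Walk.nil)) with hrest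
        set cyc : G.Walk v v := Walk.cons hva rest with hcyc
        have hrestpath : rest.IsPath := by
          rw [hrest]
          simp only [Walk.cons_isPath_iff, Walk.isPath_iff_eq_nil, Walk.support_cons,
            Walk.support_nil, List.mem_cons, List.mem_singleton]
          push_neg
          refine ⟨⟨⟨trivial, ?_⟩, ?_, ?_⟩, ?_, ?_, ?_⟩
          · exact ⟨hbv, by simp⟩
          · exact hcbne
          · exact ⟨hcv, by simp⟩
          · exact hacne
          · exact hab
          · exact ⟨hav, by simp⟩
        have hcycle : cyc.IsCycle := by
          rw [hcyc, Walk.cons_isCycle_iff]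
          refine ⟨hrestpath, ?_⟩
          rw [hrest]
          simp only [Walk.edges_cons, Walk.edges_nil, List.mem_cons, List.not_mem_nil,
            Sym2.eq_iff]
          push_neg
          constructor
          · exact ⟨fun _ => hacne, fun h => absurd h (Ne.symm hcv)⟩
          · refine ⟨⟨fun _ => hab, fun _ => hacne⟩, ⟨fun _ => hav, fun _ => hab⟩, trivial⟩
        refine ⟨v, cyc, hcycle, by simp [hcyc, hrest], a, b, ?_, ?_, habadj, ?_⟩
        · simp [hcyc, hrest, Walk.support_cons]
        · simp [hcyc, hrest, Walk.support_cons]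
        · rw [hcyc, hrest]
          simp only [Walk.edges_cons, Walk.edges_nil, List.mem_cons, List.not_mem_nil,
            Sym2.eq_iff]
          push_neg
          refine ⟨⟨fun h => absurd h hav, fun _ => hbv⟩,
            ⟨fun _ => Ne.symm hcbne, fun h => absurd h hacne⟩,
            ⟨fun h => absurd h hacne, fun _ => Ne.symm hcbne⟩,
            ⟨fun _ => hbv, fun h => absurd h hav⟩, trivial⟩
      · -- n ≥ 5 : delete v and recurse
        have hE' : 2 * (n - 1) - 4 < (G.induce ({v}ᶜ : Set V)).edgeFinset.card := by
          omega
        have := ih (n - 1) (by omega) (G.induce ({v}ᶜ : Set V)) hcards (by omega) hE'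
        exact transfer_chorded (Embedding.induce ({v}ᶜ : Set V)) this

/-- Every simple graph on `n ≥ 4` vertices with more than `2n - 4` edges contains a cycle of
length at least 4 together with a chord of that cycle. -/
theorem dense_graph_has_chorded_cycle {V : Type*} [Fintype V] [DecidableEq V]
    (G : SimpleGraph V) [DecidableRel G.Adj]
    (hn : 4 ≤ Fintype.card V) (hE : 2 * Fintype.card V - 4 < G.edgeFinset.card) :
    ∃ (v : V) (c : G.Walk v v), c.IsCycle ∧ 4 ≤ c.length ∧
      ∃ x y : V, x ∈ c.support ∧ y ∈ c.support ∧ G.Adj x y ∧ s(x, y) ∉ c.edges :=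
  aux (Fintype.card V) G rfl hn hE
end

section
/- For n ≥ 4, there exists a chord-free simple graph on n vertices with exactly 2n - 4 edges, namely the complete bipartite graph K_{2,n-2}. -/
open SimpleGraph

variable {α β : Type*}

lemma adj_isLeft {x y : α ⊕ β} (h : (completeBipartiteGraph α β).Adj x y) :
    y.isLeft = !x.isLeft := by
  cases x <;> cases y <;> simp_all

lemma getVert_isLeft {u w : α ⊕ β} (p : (completeBipartiteGraph α β).Walk u w) :
    ∀ i, i ≤ p.length → (p.getVert i).isLeft = ((i % 2 == 1)).xor u.isLeft := by
  induction p with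
  | nil => intro i hi; simp at hi; subst hi; simp
  | cons h q ih =>
    intro i hi
    cases i with
    | zero => simp [SimpleGraph.Walk.getVert_zero]
    | succ i =>
      rw [SimpleGraph.Walk.getVert_cons_succ, ih i (by simpa using hi)]
      rw [adj_isLeft h]
      rcases Nat.even_or_odd i with he | ho
      · have h1 : i % 2 = 0 := Nat.even_iff.mp he
        have h2 : (i+1) % 2 = 1 := by omega
        simp [h1, h2]
      · have h1 : i % 2 = 1 := Nat.odd_iff.mp ho
        have h2 : (i+1) % 2 = 0 := by omega
        simp [h1, h2]

lemma support_getElem {V : Type*} {G : SimpleGraph V} {u w : V} (p : G.Walk u w) :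
    ∀ i (h : i < p.support.length), p.support[i] = p.getVert i := by
  induction p with
  | nil => intro i h; simp at h; subst h; simp
  | cons hadj q ih =>
    intro i h
    cases i with
    | zero => simp
    | succ i =>
      simp only [SimpleGraph.Walk.support_cons, List.getElem_cons_succ,
        SimpleGraph.Walk.getVert_cons_succ]
      exact ih i (by simpa [SimpleGraph.Walk.length_support] using
        (by simpa [SimpleGraph.Walk.length_support] using h : i + 1 < q.support.length + 1))

lemma fin2_three {a b c : Fin 2} (hab : a ≠ b) (hac : a ≠ c) (hbc : b ≠ c) : False := by
  omega

lemma isLeft_inl' {x : α ⊕ β} (h : x.isLeft = true) : ∃ a, x = Sum.inl a := by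
  cases x <;> simp_all

lemma cb_chordFree (m : ℕ) : ChordFree (completeBipartiteGraph (Fin 2) (Fin m)) := by
  intro v c hc hlen x y hx hy hxy
  have htail : c.support.tail.Nodup := ((SimpleGraph.Walk.isCycle_def c).mp hc).2.2
  have hslen : c.support.length = c.length + 1 := SimpleGraph.Walk.length_support c
  have hdist : ∀ i j, 1 ≤ i → i < j → j ≤ c.length → c.getVert i ≠ c.getVert j := by
    intro i j hi hij hj hne
    have hi' : i - 1 < c.support.tail.length := by simp [List.length_tail, hslen]; omega
    have hj' : j - 1 < c.support.tail.length := by simp [List.length_tail, hslen]; omega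
    have e1 : c.support.tail[i-1] = c.getVert i := by
      rw [List.getElem_tail]
      rw [support_getElem]
      congr 1; omega
    have e2 : c.support.tail[j-1] = c.getVert j := by
      rw [List.getElem_tail]
      rw [support_getElem]
      congr 1; omega
    have := (List.Nodup.getElem_inj_iff htail (hi := hi') (hj := hj')).mp (by rw [e1, e2]; exact hne)
    omega
  have hpar : c.length % 2 = 0 := by
    have h0 := getVert_isLeft c c.length le_rfl
    rw [SimpleGraph.Walk.getVert_length] at h0
    rcases Nat.even_or_odd c.length with he | ho
    · exact Nat.even_iff.mp he
    · rw [Nat.odd_iff.mp ho] at h0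
      simp at h0
      cases v <;> simp at h0
  have hL : c.length = 4 := by
    by_contra hne
    have h6 : 6 ≤ c.length := by omega
    have key : ∀ i, i ≤ c.length → (c.getVert i).isLeft = ((i % 2 == 1)).xor v.isLeft :=
      getVert_isLeft c
    rcases hv : v.isLeft with hf | ht
    · -- v.isLeft = false, odd indices are left
      have g1 := key 1 (by omega); have g3 := key 3 (by omega); have g5 := key 5 (by omega)
      rw [hv] at g1 g3 g5
      simp at g1 g3 g5
      obtain ⟨a, ha⟩ := isLeft_inl' g1
      obtain ⟨b, hb⟩ := isLeft_inl' g3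
      obtain ⟨cc, hcc⟩ := isLeft_inl' g5
      refine fin2_three (a := a) (b := b) (c := cc) ?_ ?_ ?_ <;> rintro rfl
      · exact hdist 1 3 (by omega) (by omega) (by omega) (by rw [ha, hb])
      · exact hdist 1 5 (by omega) (by omega) (by omega) (by rw [ha, hcc])
      · exact hdist 3 5 (by omega) (by omega) (by omega) (by rw [hb, hcc])
    · have g1 := key 2 (by omega); have g3 := key 4 (by omega); have g5 := key 6 (by omega)
      rw [hv] at g1 g3 g5
      simp at g1 g3 g5
      obtain ⟨a, ha⟩ := isLeft_inl' g1
      obtain ⟨b, hb⟩ := isLeft_inl' g3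
      obtain ⟨cc, hcc⟩ := isLeft_inl' g5
      refine fin2_three (a := a) (b := b) (c := cc) ?_ ?_ ?_ <;> rintro rfl
      · exact hdist 2 4 (by omega) (by omega) (by omega) (by rw [ha, hb])
      · exact hdist 2 6 (by omega) (by omega) (by omega) (by rw [ha, hcc])
      · exact hdist 4 6 (by omega) (by omega) (by omega) (by rw [hb, hcc])
  clear hdist hpar htail hslen hlen hc
  cases c with
  | nil => simp at hL
  | cons h1 c =>
    cases c with
    | nil => simp at hL
    | cons h2 c =>
      cases c with
      | nil => simp at hL
      | cons h3 c =>
        cases c with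
        | nil => simp at hL
        | cons h4 c =>
          cases c with
          | cons h5 c => simp at hL
          | nil =>
            rename_i w1 w2 w3
            simp only [SimpleGraph.Walk.support_cons, SimpleGraph.Walk.support_nil,
              List.mem_cons, List.mem_singleton, List.not_mem_nil, or_false] at hx hy
            simp only [SimpleGraph.Walk.edges_cons, SimpleGraph.Walk.edges_nil,
              List.mem_cons, List.not_mem_nil, or_false]
            have s1 := adj_isLeft h1
            have s2 := adj_isLeft h2
            have s3 := adj_isLeft h3
            have sxy := adj_isLeft hxy
            rcases hx with rfl | rfl | rfl | rfl | rfl <;>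
              rcases hy with rfl | rfl | rfl | rfl | rfl <;>
              first
                | exact .inl rfl
                | exact .inl Sym2.eq_swap
                | exact .inr (.inl rfl)
                | exact .inr (.inl Sym2.eq_swap)
                | exact .inr (.inr (.inl rfl))
                | exact .inr (.inr (.inl Sym2.eq_swap))
                | exact .inr (.inr (.inr rfl))
                | exact .inr (.inr (.inr Sym2.eq_swap))
                | (exfalso
                   simp only [s1, s2, s3, Bool.not_not, Bool.not_eq_self,
                     Bool.eq_not_self] at sxy)

lemma cb_edge_equiv (m : ℕ) :
    Function.Bijective (fun p : Fin 2 × Fin m =>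
      (⟨s(Sum.inl p.1, Sum.inr p.2), by simp⟩ :
        (completeBipartiteGraph (Fin 2) (Fin m)).edgeSet)) := by
  constructor
  · rintro ⟨a, b⟩ ⟨a', b'⟩ h
    simp only [Subtype.mk.injEq, Sym2.eq_iff] at h
    rcases h with ⟨h1, h2⟩ | ⟨h1, h2⟩ <;> simp_all
  · rintro ⟨e, he⟩
    induction e using Sym2.ind with
    | _ u w =>
      rw [SimpleGraph.mem_edgeSet] at he
      rcases u with a | b <;> rcases w with a' | b' <;> simp at he
      · exact ⟨(a, b'), rfl⟩
      · exact ⟨(a', b), Subtype.ext Sym2.eq_swap⟩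

/-- For `n ≥ 4`, the complete bipartite graph `K_{2, n-2}` is a chord-free graph
on `n` vertices with exactly `2n - 4` edges: the density bound is tight. -/
theorem chordFree_density_tight (n : ℕ) (hn : 4 ≤ n) :
    Fintype.card (Fin 2 ⊕ Fin (n - 2)) = n ∧
    ChordFree (completeBipartiteGraph (Fin 2) (Fin (n - 2))) ∧
    Nat.card (completeBipartiteGraph (Fin 2) (Fin (n - 2))).edgeSet = 2 * n - 4 := by
  refine ⟨?_, cb_chordFree _, ?_⟩
  · simp; omega
  · rw [Nat.card_congr (Equiv.ofBijective _ (cb_edge_equiv (n - 2))).symm]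
    simp only [Nat.card_eq_fintype_card, Fintype.card_prod, Fintype.card_fin]
    omega
end
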